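/- Integrated policy-improvement lower bound: let (X, 𝒳) and (Y, 𝒴) be measurable spaces, ρ a probability measure on X, r : X × Y → ℝ measurable with 0 ≤ r ≤ 1, 0 < ε ≤ 3/4, and let π, π_k, α be Markov kernels from X to Y (probability measures π(·|x), π_k(·|x), α(·|x) for each x), with all the functions below measurable and integrable in x. Then ∫ J(π(·|x)) dρ(x) − ∫ J(π_k(·|x)) dρ(x) ≥ ∫ L_{α(·|x)}(π(·|x)) dρ(x) − 2·M_{α,r,ε}·( ∫ TV(π(·|x), α(·|x))² dρ(x) )^{1/2} − 2·∫ TV(π_k(·|x), α(·|x)) dρ(x), where M_{α,r,ε} = ( ∫ ((1 − σ_{α(·|x),ε})/σ_{α(·|x),ε})² dρ(x) )^{1/2}. -/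

import Mathlib

open MeasureTheory

/-- Expected reward `J(m) = ∫ r dm`. -/
noncomputable def J {Y : Type*} [MeasurableSpace Y] (r : Y → ℝ) (m : Measure Y) : ℝ :=
  ∫ y, r y ∂m

/-- Variance `σ_m² = ∫ (r − μ_m)² dm` with `μ_m = J(m)`. -/
noncomputable def rvar {Y : Type*} [MeasurableSpace Y] (r : Y → ℝ) (m : Measure Y) : ℝ :=
  ∫ y, (r y - J r m) ^ 2 ∂m

/-- Regularized standard deviation `σ_{m,ε} = sqrt(σ_m² + ε)`. -/
noncomputable def sigmaEps {Y : Type*} [MeasurableSpace Y] (r : Y → ℝ) (m : Measure Y)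
    (ε : ℝ) : ℝ :=
  Real.sqrt (rvar r m + ε)

/-- Off-policy advantage objective `L_α(π) = (J(π) − μ_α)/σ_{α,ε}`. -/
noncomputable def Ladv {Y : Type*} [MeasurableSpace Y] (r : Y → ℝ) (α π : Measure Y)
    (ε : ℝ) : ℝ :=
  (J r π - J r α) / sigmaEps r α ε

/-- Total variation distance `TV(m₁,m₂) = sup_{A measurable} |m₁(A) − m₂(A)|`. -/
noncomputable def tvDist {Y : Type*} [MeasurableSpace Y] (m₁ m₂ : Measure Y) : ℝ :=
  ⨆ A : {s : Set Y // MeasurableSet s}, |(m₁ A.1).toReal - (m₂ A.1).toReal|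

section Aux

variable {Y : Type*} [MeasurableSpace Y]

lemma tv_bdd (m₁ m₂ : Measure Y) [IsProbabilityMeasure m₁] [IsProbabilityMeasure m₂] :
    BddAbove (Set.range fun A : {s : Set Y // MeasurableSet s} =>
      |(m₁ A.1).toReal - (m₂ A.1).toReal|) := by
  refine ⟨2, ?_⟩
  rintro _ ⟨A, rfl⟩
  have h1 : (m₁ A.1).toReal ≤ 1 := by
    simpa using ENNReal.toReal_mono ENNReal.one_ne_top (prob_le_one (μ := m₁) (s := A.1))
  have h2 : (m₂ A.1).toReal ≤ 1 := by
    simpa using ENNReal.toReal_mono ENNReal.one_ne_top (prob_le_one (μ := m₂) (s := A.1))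
  have h3 : (0:ℝ) ≤ (m₁ A.1).toReal := ENNReal.toReal_nonneg
  have h4 : (0:ℝ) ≤ (m₂ A.1).toReal := ENNReal.toReal_nonneg
  rw [abs_le]; constructor <;> linarith

lemma tv_nonneg (m₁ m₂ : Measure Y) [IsProbabilityMeasure m₁] [IsProbabilityMeasure m₂] :
    0 ≤ tvDist m₁ m₂ :=
  le_trans (abs_nonneg _) (le_ciSup (tv_bdd m₁ m₂) ⟨∅, MeasurableSet.empty⟩)

lemma abs_J_sub_le (r : Y → ℝ) (hr_meas : Measurable r)
    (hr : ∀ y, 0 ≤ r y ∧ r y ≤ 1) (m₁ m₂ : Measure Y)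
    [IsProbabilityMeasure m₁] [IsProbabilityMeasure m₂] :
    |J r m₁ - J r m₂| ≤ 2 * tvDist m₁ m₂ := by
  set μ := m₁ + m₂ with hμ
  have h1 : m₁ ≪ μ := Measure.absolutelyContinuous_of_le (Measure.le_add_right le_rfl)
  have h2 : m₂ ≪ μ := Measure.absolutelyContinuous_of_le (Measure.le_add_left le_rfl)
  set g₁ : Y → ℝ := fun y => (m₁.rnDeriv μ y).toReal with hg₁
  set g₂ : Y → ℝ := fun y => (m₂.rnDeriv μ y).toReal with hg₂
  have hg₁m : Measurable g₁ := (Measure.measurable_rnDeriv _ _).ennreal_toReal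
  have hg₂m : Measurable g₂ := (Measure.measurable_rnDeriv _ _).ennreal_toReal
  have hig₁ : Integrable g₁ μ := Measure.integrable_toReal_rnDeriv
  have hig₂ : Integrable g₂ μ := Measure.integrable_toReal_rnDeriv
  have hJ₁ : J r m₁ = ∫ y, g₁ y * r y ∂μ := by
    rw [J, ← integral_rnDeriv_smul h1 (f := r)]; simp [hg₁, smul_eq_mul]
  have hJ₂ : J r m₂ = ∫ y, g₂ y * r y ∂μ := by
    rw [J, ← integral_rnDeriv_smul h2 (f := r)]; simp [hg₂, smul_eq_mul]
  have hrint₁ : Integrable (fun y => g₁ y * r y) μ := by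
    refine hig₁.mono' (hg₁m.mul hr_meas).aestronglyMeasurable ?_
    filter_upwards with y
    calc ‖g₁ y * r y‖ = g₁ y * r y :=
          Real.norm_of_nonneg (mul_nonneg ENNReal.toReal_nonneg (hr y).1)
      _ ≤ g₁ y := mul_le_of_le_one_right ENNReal.toReal_nonneg (hr y).2
  have hrint₂ : Integrable (fun y => g₂ y * r y) μ := by
    refine hig₂.mono' (hg₂m.mul hr_meas).aestronglyMeasurable ?_
    filter_upwards with y
    calc ‖g₂ y * r y‖ = g₂ y * r y :=
          Real.norm_of_nonneg (mul_nonneg ENNReal.toReal_nonneg (hr y).1)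
      _ ≤ g₂ y := mul_le_of_le_one_right ENNReal.toReal_nonneg (hr y).2
  have habs : |J r m₁ - J r m₂| ≤ ∫ y, |g₁ y - g₂ y| ∂μ := by
    rw [hJ₁, hJ₂, ← integral_sub hrint₁ hrint₂]
    rw [← Real.norm_eq_abs]
    refine (norm_integral_le_integral_norm _).trans ?_
    simp only [Real.norm_eq_abs]
    refine integral_mono (hrint₁.sub hrint₂).abs (hig₁.sub hig₂).abs ?_
    intro y
    show |g₁ y * r y - g₂ y * r y| ≤ |g₁ y - g₂ y|
    have : g₁ y * r y - g₂ y * r y = (g₁ y - g₂ y) * r y := by ring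
    rw [this, abs_mul]
    calc |g₁ y - g₂ y| * |r y| ≤ |g₁ y - g₂ y| * 1 := by
          exact mul_le_mul_of_nonneg_left (by rw [abs_of_nonneg (hr y).1]; exact (hr y).2)
            (abs_nonneg _)
      _ = |g₁ y - g₂ y| := mul_one _
  set A : Set Y := {y | g₂ y < g₁ y} with hA
  have hAm : MeasurableSet A := measurableSet_lt hg₂m hg₁m
  have hs₁ : ∫ y in A, g₁ y ∂μ = (m₁ A).toReal := Measure.setIntegral_toReal_rnDeriv h1 A
  have hs₂ : ∫ y in A, g₂ y ∂μ = (m₂ A).toReal := Measure.setIntegral_toReal_rnDeriv h2 A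
  have ht₁ : ∫ y, g₁ y ∂μ = 1 := by
    rw [Measure.integral_toReal_rnDeriv h1]; simp
  have ht₂ : ∫ y, g₂ y ∂μ = 1 := by
    rw [Measure.integral_toReal_rnDeriv h2]; simp
  have hsplit : ∫ y, |g₁ y - g₂ y| ∂μ
      = 2 * ((m₁ A).toReal - (m₂ A).toReal) := by
    have hd : Integrable (fun y => g₁ y - g₂ y) μ := hig₁.sub hig₂
    have hcompl : ∫ y in A, (g₁ y - g₂ y) ∂μ + ∫ y in Aᶜ, (g₁ y - g₂ y) ∂μ
        = ∫ y, (g₁ y - g₂ y) ∂μ := integral_add_compl hAm hd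
    have htot : ∫ y, (g₁ y - g₂ y) ∂μ = 0 := by
      rw [integral_sub hig₁ hig₂, ht₁, ht₂]; ring
    have h₁ : ∫ y, |g₁ y - g₂ y| ∂μ
        = ∫ y in A, (g₁ y - g₂ y) ∂μ - ∫ y in Aᶜ, (g₁ y - g₂ y) ∂μ := by
      rw [← integral_indicator hAm, ← integral_indicator hAm.compl,
        ← integral_sub (hd.indicator hAm) (hd.indicator hAm.compl)]
      refine integral_congr_ae (Filter.Eventually.of_forall fun y => ?_)
      by_cases hy : y ∈ A
      · have hpos : 0 < g₁ y - g₂ y := sub_pos.mpr hy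
        simp [Set.indicator_of_mem hy,
          Set.indicator_of_notMem (by simpa using hy : y ∉ Aᶜ), abs_of_nonneg hpos.le]
      · have hle : g₁ y - g₂ y ≤ 0 := by
          have : ¬ g₂ y < g₁ y := hy
          linarith [not_lt.mp this]
        simp [Set.indicator_of_notMem hy,
          Set.indicator_of_mem (by simpa using hy : y ∈ Aᶜ), abs_of_nonpos hle]
    have h₂ : ∫ y in A, (g₁ y - g₂ y) ∂μ = (m₁ A).toReal - (m₂ A).toReal := by
      rw [integral_sub (hig₁.restrict) (hig₂.restrict), hs₁, hs₂]
    rw [h₁, h₂]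
    have : ∫ y in Aᶜ, (g₁ y - g₂ y) ∂μ = -((m₁ A).toReal - (m₂ A).toReal) := by
      rw [← h₂] at *; linarith [hcompl, htot]
    rw [this]; ring
  have htv : (m₁ A).toReal - (m₂ A).toReal ≤ tvDist m₁ m₂ :=
    le_trans (le_abs_self _) (le_ciSup (tv_bdd m₁ m₂) ⟨A, hAm⟩)
  calc |J r m₁ - J r m₂| ≤ ∫ y, |g₁ y - g₂ y| ∂μ := habs
    _ = 2 * ((m₁ A).toReal - (m₂ A).toReal) := hsplit
    _ ≤ 2 * tvDist m₁ m₂ := by linarith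

lemma pointwise_bound (r : Y → ℝ) (hr_meas : Measurable r)
    (hr : ∀ y, 0 ≤ r y ∧ r y ≤ 1) (ε : ℝ) (hε : 0 < ε)
    (π πk α : Measure Y) [IsProbabilityMeasure π] [IsProbabilityMeasure πk]
    [IsProbabilityMeasure α] :
    Ladv r α π ε - 2 * |(1 - sigmaEps r α ε) / sigmaEps r α ε| * tvDist π α
      - 2 * tvDist πk α ≤ J r π - J r πk := by
  set σ := sigmaEps r α ε with hσdef
  have hrv : 0 ≤ rvar r α := integral_nonneg (fun y => sq_nonneg _)
  have hσ : 0 < σ := Real.sqrt_pos.mpr (by linarith)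
  set L := Ladv r α π ε with hLdef
  have hL : J r π - J r α = L * σ := by
    rw [hLdef, Ladv, ← hσdef]; field_simp
  have h1 : |J r π - J r α| ≤ 2 * tvDist π α := abs_J_sub_le r hr_meas hr π α
  have h2 : |J r α - J r πk| ≤ 2 * tvDist πk α := by
    rw [abs_sub_comm]; exact abs_J_sub_le r hr_meas hr πk α
  have hbσ : |L| * σ ≤ 2 * tvDist π α := by
    rw [← abs_of_pos hσ, ← abs_mul, ← hL]; exact h1
  have hdiv : |(1 - σ) / σ| * σ = |1 - σ| := by
    rw [abs_div, abs_of_pos hσ, div_mul_cancel₀ _ (ne_of_gt hσ)]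
  have hLa : L * (1 - σ) ≤ |L| * |1 - σ| := by
    calc L * (1 - σ) ≤ |L * (1 - σ)| := le_abs_self _
      _ = |L| * |1 - σ| := abs_mul _ _
  have hk : -(2 * tvDist πk α) ≤ J r α - J r πk := neg_le_of_abs_le h2
  -- key: L - 2 * |(1-σ)/σ| * TV ≤ L * σ
  have hkey : L - 2 * |(1 - σ) / σ| * tvDist π α ≤ L * σ := by
    have h3 : |L| * |1 - σ| ≤ 2 * |(1 - σ) / σ| * tvDist π α := by
      have h4 : |(1 - σ) / σ| * (|L| * σ) ≤ |(1 - σ) / σ| * (2 * tvDist π α) :=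
        mul_le_mul_of_nonneg_left hbσ (abs_nonneg _)
      calc |L| * |1 - σ| = |(1 - σ) / σ| * (|L| * σ) := by
            rw [show |(1 - σ) / σ| * (|L| * σ) = |(1 - σ) / σ| * σ * |L| by ring, hdiv]; ring
        _ ≤ |(1 - σ) / σ| * (2 * tvDist π α) := h4
        _ = 2 * |(1 - σ) / σ| * tvDist π α := by ring
    nlinarith [hLa, h3]
  have : J r π - J r πk = L * σ + (J r α - J r πk) := by rw [← hL]; ring
  rw [this]
  linarith

end Aux

/-- Integrated policy-improvement lower bound over the prompt distribution `ρ`,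
obtained from the pointwise bound via Cauchy–Schwarz. -/
theorem integrated_offpolicy_improvement {X Y : Type*}
    [MeasurableSpace X] [MeasurableSpace Y]
    (ρ : Measure X) [IsProbabilityMeasure ρ]
    (r : X × Y → ℝ) (hr_meas : Measurable r) (hr : ∀ p, 0 ≤ r p ∧ r p ≤ 1)
    (ε : ℝ) (hε : 0 < ε) (hε' : ε ≤ 3 / 4)
    (π πk α : X → Measure Y)
    (hπ : ∀ x, IsProbabilityMeasure (π x))
    (hπk : ∀ x, IsProbabilityMeasure (πk x))
    (hα : ∀ x, IsProbabilityMeasure (α x))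
    (hint_Jπ : Integrable (fun x => J (fun y => r (x, y)) (π x)) ρ)
    (hint_Jπk : Integrable (fun x => J (fun y => r (x, y)) (πk x)) ρ)
    (hint_L : Integrable (fun x => Ladv (fun y => r (x, y)) (α x) (π x) ε) ρ)
    (hint_coeff : Integrable (fun x =>
      ((1 - sigmaEps (fun y => r (x, y)) (α x) ε) /
        sigmaEps (fun y => r (x, y)) (α x) ε) ^ 2) ρ)
    (hint_tv2 : Integrable (fun x => (tvDist (π x) (α x)) ^ 2) ρ)
    (hint_tv : Integrable (fun x => tvDist (πk x) (α x)) ρ) :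
    (∫ x, J (fun y => r (x, y)) (π x) ∂ρ) - ∫ x, J (fun y => r (x, y)) (πk x) ∂ρ ≥
      (∫ x, Ladv (fun y => r (x, y)) (α x) (π x) ε ∂ρ)
        - 2 * Real.sqrt (∫ x, ((1 - sigmaEps (fun y => r (x, y)) (α x) ε) /
            sigmaEps (fun y => r (x, y)) (α x) ε) ^ 2 ∂ρ)
          * Real.sqrt (∫ x, (tvDist (π x) (α x)) ^ 2 ∂ρ)
        - 2 * ∫ x, tvDist (πk x) (α x) ∂ρ := by
  set c : X → ℝ := fun x => (1 - sigmaEps (fun y => r (x, y)) (α x) ε) /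
      sigmaEps (fun y => r (x, y)) (α x) ε with hc
  set t : X → ℝ := fun x => tvDist (π x) (α x) with ht
  set tk : X → ℝ := fun x => tvDist (πk x) (α x) with htk
  set Lf : X → ℝ := fun x => Ladv (fun y => r (x, y)) (α x) (π x) ε with hLf
  have ht_nonneg : ∀ x, 0 ≤ t x := fun x => by
    haveI := hπ x; haveI := hα x; exact tv_nonneg _ _
  have htk_nonneg : ∀ x, 0 ≤ tk x := fun x => by
    haveI := hπk x; haveI := hα x; exact tv_nonneg _ _
  -- pointwise bound
  have hpt : ∀ x, Lf x - 2 * |c x| * t x - 2 * tk x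
      ≤ J (fun y => r (x, y)) (π x) - J (fun y => r (x, y)) (πk x) := by
    intro x
    haveI := hπ x; haveI := hπk x; haveI := hα x
    exact pointwise_bound (fun y => r (x, y)) (hr_meas.comp measurable_prodMk_left)
      (fun y => hr (x, y)) ε hε (π x) (πk x) (α x)
  -- measurability
  have hc_abs : AEStronglyMeasurable (fun x => |c x|) ρ := by
    have h := Real.continuous_sqrt.comp_aestronglyMeasurable
      hint_coeff.aestronglyMeasurable
    simpa [Real.sqrt_sq_eq_abs] using h
  have ht_meas : AEStronglyMeasurable t ρ := by
    have h := Real.continuous_sqrt.comp_aestronglyMeasurable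
      hint_tv2.aestronglyMeasurable
    have : (fun x => Real.sqrt (t x ^ 2)) = t := by
      funext x; rw [Real.sqrt_sq_eq_abs, abs_of_nonneg (ht_nonneg x)]
    rwa [this] at h
  -- integrability of |c| * t
  have hct_int : Integrable (fun x => |c x| * t x) ρ := by
    refine Integrable.mono' ((hint_coeff.add hint_tv2).div_const 2)
      (hc_abs.mul ht_meas) ?_
    filter_upwards with x
    have h0 : (0:ℝ) ≤ |c x| * t x := mul_nonneg (abs_nonneg _) (ht_nonneg x)
    rw [Real.norm_of_nonneg h0]
    show |c x| * t x ≤ (c x ^ 2 + t x ^ 2) / 2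
    nlinarith [sq_nonneg (|c x| - t x), sq_abs (c x)]
  -- integrate the pointwise bound
  have hrhs_int : Integrable (fun x => Lf x - 2 * |c x| * t x - 2 * tk x) ρ := by
    have h1 : Integrable (fun x => 2 * |c x| * t x) ρ := by
      have := hct_int.const_mul 2
      simpa [mul_assoc] using this
    exact (hint_L.sub h1).sub (hint_tv.const_mul 2)
  have hmono : ∫ x, (Lf x - 2 * |c x| * t x - 2 * tk x) ∂ρ
      ≤ ∫ x, (J (fun y => r (x, y)) (π x) - J (fun y => r (x, y)) (πk x)) ∂ρ :=
    integral_mono hrhs_int (hint_Jπ.sub hint_Jπk) hpt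
  have h2ct : Integrable (fun x => 2 * |c x| * t x) ρ := by
    have := hct_int.const_mul 2; simpa [mul_assoc] using this
  have hsplit : ∫ x, (Lf x - 2 * |c x| * t x - 2 * tk x) ∂ρ
      = (∫ x, Lf x ∂ρ) - 2 * (∫ x, |c x| * t x ∂ρ) - 2 * (∫ x, tk x ∂ρ) := by
    have hA : Integrable (fun x => Lf x - 2 * |c x| * t x) ρ := hint_L.sub h2ct
    have hB : Integrable (fun x => 2 * tk x) ρ := hint_tv.const_mul 2
    rw [integral_sub hA hB, integral_sub hint_L h2ct, integral_const_mul]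
    have : ∫ x, 2 * |c x| * t x ∂ρ = ∫ x, 2 * (|c x| * t x) ∂ρ := by
      congr 1; funext x; ring
    rw [this, integral_const_mul]
  have hJsplit : ∫ x, (J (fun y => r (x, y)) (π x) - J (fun y => r (x, y)) (πk x)) ∂ρ
      = (∫ x, J (fun y => r (x, y)) (π x) ∂ρ) - ∫ x, J (fun y => r (x, y)) (πk x) ∂ρ :=
    integral_sub hint_Jπ hint_Jπk
  -- Cauchy–Schwarz
  have hCS : ∫ x, |c x| * t x ∂ρ
      ≤ Real.sqrt (∫ x, c x ^ 2 ∂ρ) * Real.sqrt (∫ x, t x ^ 2 ∂ρ) := by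
    have hpq : Real.HolderConjugate 2 2 := Real.HolderConjugate.two_two
    have hmc : MemLp (fun x => |c x|) (ENNReal.ofReal 2) ρ := by
      have : ENNReal.ofReal 2 = 2 := by norm_num
      rw [this]
      refine (memLp_two_iff_integrable_sq hc_abs).mpr ?_
      have : (fun x => |c x| ^ 2) = fun x => c x ^ 2 := by
        funext x; rw [sq_abs]
      rw [this]; exact hint_coeff
    have hmt : MemLp t (ENNReal.ofReal 2) ρ := by
      have : ENNReal.ofReal 2 = 2 := by norm_num
      rw [this]
      exact (memLp_two_iff_integrable_sq ht_meas).mpr hint_tv2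
    have h := integral_mul_le_Lp_mul_Lq_of_nonneg hpq
      (Filter.Eventually.of_forall fun x => abs_nonneg (c x))
      (Filter.Eventually.of_forall fun x => ht_nonneg x) hmc hmt
    have e1 : ∫ x, |c x| ^ (2:ℝ) ∂ρ = ∫ x, c x ^ 2 ∂ρ := by
      congr 1; funext x
      rw [show |c x| ^ (2:ℝ) = |c x| ^ (2:ℕ) by rw [← Real.rpow_natCast]; norm_num, sq_abs]
    have e2 : ∫ x, t x ^ (2:ℝ) ∂ρ = ∫ x, t x ^ 2 ∂ρ := by
      congr 1; funext x
      rw [show t x ^ (2:ℝ) = t x ^ (2:ℕ) by rw [← Real.rpow_natCast]; norm_num]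
    rw [e1, e2] at h
    calc ∫ x, |c x| * t x ∂ρ
        ≤ (∫ x, c x ^ 2 ∂ρ) ^ (1/(2:ℝ)) * (∫ x, t x ^ 2 ∂ρ) ^ (1/(2:ℝ)) := h
      _ = Real.sqrt (∫ x, c x ^ 2 ∂ρ) * Real.sqrt (∫ x, t x ^ 2 ∂ρ) := by
          rw [Real.sqrt_eq_rpow, Real.sqrt_eq_rpow]
  have hfinal := hmono
  rw [hsplit, hJsplit] at hfinal
  have : 2 * (∫ x, |c x| * t x ∂ρ)
      ≤ 2 * (Real.sqrt (∫ x, c x ^ 2 ∂ρ) * Real.sqrt (∫ x, t x ^ 2 ∂ρ)) := by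
    linarith
  simp only [ge_iff_le, hc, ht, htk, hLf] at *
  linarith
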